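/- For every ε ∈ (0, 1/2) and all n ≥ some threshold depending on ε, and for every k ≤ n, the number of half-space self-avoiding walks of length k on ℤ² whose branch decomposition has fewer than 7·n^{1/2−ε} terms is at most exp(8·n^{1/2−ε}·log n) · μ^k. -/

import Mathlib

/-- A self-avoiding walk of length `n` on `ℤ²`, starting at the origin, with
nearest-neighbour steps, padded to be constant after time `n`. -/
def IsSAW (n : ℕ) (γ : ℕ → ℤ × ℤ) : Prop :=
  γ 0 = (0, 0) ∧
  (∀ i < n, |(γ (i + 1)).1 - (γ i).1| + |(γ (i + 1)).2 - (γ i).2| = 1) ∧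
  (∀ i ≤ n, ∀ j ≤ n, γ i = γ j → i = j) ∧
  (∀ i, n ≤ i → γ i = γ n)

/-- The number of self-avoiding walks of length `n` on `ℤ²` starting at the origin. -/
noncomputable def cSAW (n : ℕ) : ℕ := Nat.card {γ : ℕ → ℤ × ℤ // IsSAW n γ}

/-- The connective constant `μ` of `ℤ²`, i.e. `lim_n cSAW n ^ (1/n)`, which by
submultiplicativity equals the infimum `⨅_{n ≥ 1} (cSAW n)^(1/n)`. -/
noncomputable def mu : ℝ := ⨅ n : ℕ, ((cSAW (n + 1) : ℝ)) ^ ((1 : ℝ) / (n + 1))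

/-- A self-avoiding bridge of length `n` on `ℤ²`: a self-avoiding walk `γ` from the
origin with `0 < y(γ k) ≤ y(γ n)` for all `1 ≤ k ≤ n`. -/
def IsBridge (n : ℕ) (γ : ℕ → ℤ × ℤ) : Prop :=
  IsSAW n γ ∧ ∀ k : ℕ, 0 < k → k ≤ n → 0 < (γ k).2 ∧ (γ k).2 ≤ (γ n).2

/-- The number of self-avoiding bridges of length `n` on `ℤ²`. -/
noncomputable def cSAB (n : ℕ) : ℕ := Nat.card {γ : ℕ → ℤ × ℤ // IsBridge n γ}

/-- A half-space self-avoiding walk of length `n` on `ℤ²`: a self-avoiding walk `γ`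
from the origin with `y(γ k) > 0` for all `0 < k ≤ n`. -/
def IsHSW (n : ℕ) (γ : ℕ → ℤ × ℤ) : Prop :=
  IsSAW n γ ∧ ∀ k : ℕ, 0 < k → k ≤ n → 0 < (γ k).2

/-- The number of half-space self-avoiding walks of length `n` on `ℤ²`. -/
noncomputable def cHSW (n : ℕ) : ℕ := Nat.card {γ : ℕ → ℤ × ℤ // IsHSW n γ}

/-- The last time in `[a, n]` at which the walk `γ` attains its maximal (if `takeMax`)
or minimal (otherwise) `y`-coordinate over `[a, n]`. -/
noncomputable def nextRecord (γ : ℕ → ℤ × ℤ) (n a : ℕ) (takeMax : Bool) : ℕ :=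
  sSup {t : ℕ | a ≤ t ∧ t ≤ n ∧ ∀ s : ℕ, a ≤ s → s ≤ n →
    cond takeMax ((γ s).2 ≤ (γ t).2) ((γ t).2 ≤ (γ s).2)}

/-- The record points `a_0 = 0, a_1, a_2, …` of the branch decomposition: `a_{k+1}` is
the last time `γ` restricted to `[a_k, n]` attains its maximal (for `a_{k+1}` with
odd index) or minimal (even index) `y`-coordinate. -/
noncomputable def recordTime (γ : ℕ → ℤ × ℤ) (n : ℕ) : ℕ → ℕ
  | 0 => 0
  | k + 1 => nextRecord γ n (recordTime γ n k) (k % 2 == 0)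

/-- The number of branches of the branch decomposition of a half-space walk of
length `n`: the first `k` with `a_k = n`. -/
noncomputable def numBranches (γ : ℕ → ℤ × ℤ) (n : ℕ) : ℕ :=
  sInf {k : ℕ | recordTime γ n k = n}

lemma saw_bound {n : ℕ} {γ : ℕ → ℤ × ℤ} (h : IsSAW n γ) :
    ∀ i, i ≤ n → |(γ i).1| + |(γ i).2| ≤ (i : ℤ) := by
  intro i
  induction i with
  | zero => intro _; simp [h.1]
  | succ i ih =>
    intro hi
    have h1 := ih (by omega)
    have h2 := h.2.1 i (by omega)
    have a1 : |(γ (i+1)).1| ≤ |(γ i).1| + |(γ (i+1)).1 - (γ i).1| := by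
      have := abs_add_le ((γ i).1) ((γ (i+1)).1 - (γ i).1)
      simpa using this
    have a2 : |(γ (i+1)).2| ≤ |(γ i).2| + |(γ (i+1)).2 - (γ i).2| := by
      have := abs_add_le ((γ i).2) ((γ (i+1)).2 - (γ i).2)
      simpa using this
    push_cast
    linarith
instance sawFinite (n : ℕ) : Finite {γ : ℕ → ℤ × ℤ // IsSAW n γ} := by
  classical
  let T := (Finset.Icc ((-(n:ℤ), -(n:ℤ)) : ℤ × ℤ) ((n:ℤ), (n:ℤ)) : Finset (ℤ × ℤ))
  let f : {γ : ℕ → ℤ × ℤ // IsSAW n γ} → (Fin (n+1) → T) := fun γ i =>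
    ⟨γ.1 i, by
      have hb := saw_bound γ.2 i (by omega)
      have hx : |(γ.1 (i:ℕ)).1| ≤ (n:ℤ) := by
        have h2 : (0:ℤ) ≤ |(γ.1 (i:ℕ)).2| := abs_nonneg _
        have : (i:ℤ) ≤ (n:ℤ) := by exact_mod_cast Nat.le_of_lt_succ i.2
        linarith
      have hy : |(γ.1 (i:ℕ)).2| ≤ (n:ℤ) := by
        have h2 : (0:ℤ) ≤ |(γ.1 (i:ℕ)).1| := abs_nonneg _
        have : (i:ℤ) ≤ (n:ℤ) := by exact_mod_cast Nat.le_of_lt_succ i.2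
        linarith
      rw [abs_le] at hx hy
      simp only [T, Finset.mem_Icc]
      exact ⟨⟨hx.1, hy.1⟩, ⟨hx.2, hy.2⟩⟩⟩
  have hf : Function.Injective f := by
    intro γ δ hfd
    apply Subtype.ext; funext t
    rcases le_or_gt t n with ht | ht
    · have := congrFun hfd ⟨t, by omega⟩
      simpa [f, Subtype.ext_iff] using this
    · have h1 := γ.2.2.2.2 t (by omega)
      have h2 := δ.2.2.2.2 t (by omega)
      have := congrFun hfd ⟨n, by omega⟩
      simp only [f, Subtype.ext_iff] at this
      simp_all
  exact Finite.of_injective f hf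
lemma finite_sub (n : ℕ) (P : (ℕ → ℤ × ℤ) → Prop) (h : ∀ γ, P γ → IsSAW n γ) :
    Finite {γ : ℕ → ℤ × ℤ // P γ} := by
  apply Finite.of_injective (fun γ : {γ // P γ} => (⟨γ.1, h _ γ.2⟩ : {γ // IsSAW n γ}))
  intro a b hab
  simpa [Subtype.ext_iff] using hab
/-- truncation of a walk at time `a`. -/
def trunc (γ : ℕ → ℤ × ℤ) (a : ℕ) : ℕ → ℤ × ℤ := fun t => γ (min t a)
/-- the walk from time `a` to `a + L`, translated to the origin. -/
def seg (γ : ℕ → ℤ × ℤ) (a L : ℕ) : ℕ → ℤ × ℤ := fun t => γ (a + min t L) - γ a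
/-- the walk reflected in the x-axis. -/
def yflip (γ : ℕ → ℤ × ℤ) : ℕ → ℤ × ℤ := fun t => ((γ t).1, -(γ t).2)
lemma trunc_isSAW {n : ℕ} {γ : ℕ → ℤ × ℤ} (h : IsSAW n γ) {a : ℕ} (ha : a ≤ n) :
    IsSAW a (trunc γ a) := by
  refine ⟨by simp [trunc, h.1], ?_, ?_, ?_⟩
  · intro i hi
    have : min (i+1) a = i + 1 := by omega
    have h2 : min i a = i := by omega
    rw [trunc, trunc, this, h2]
    exact h.2.1 i (by omega)
  · intro i hi j hj he
    have : min i a = i := by omega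
    have h2 : min j a = j := by omega
    rw [trunc, trunc, this, h2] at he
    exact h.2.2.1 i (by omega) j (by omega) he
  · intro i hi
    simp only [trunc]
    congr 1
    omega
lemma seg_isSAW {n : ℕ} {γ : ℕ → ℤ × ℤ} (h : IsSAW n γ) {a L : ℕ} (ha : a + L ≤ n) :
    IsSAW L (seg γ a L) := by
  refine ⟨by simp [seg]; rfl, ?_, ?_, ?_⟩
  · intro i hi
    have e1 : min (i+1) L = i + 1 := by omega
    have e2 : min i L = i := by omega
    simp only [seg, e1, e2, Prod.fst_sub, Prod.snd_sub]
    have : a + (i + 1) = (a + i) + 1 := by omega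
    rw [this]
    have := h.2.1 (a + i) (by omega)
    convert this using 3 <;> ring
  · intro i hi j hj he
    have e1 : min i L = i := by omega
    have e2 : min j L = j := by omega
    simp only [seg, e1, e2, sub_left_inj] at he
    have := h.2.2.1 (a+i) (by omega) (a+j) (by omega) he
    omega
  · intro i hi
    simp only [seg]
    congr 2
    omega
lemma yflip_isSAW {n : ℕ} {γ : ℕ → ℤ × ℤ} (h : IsSAW n γ) : IsSAW n (yflip γ) := by
  refine ⟨by simp [yflip, h.1], ?_, ?_, ?_⟩
  · intro i hi
    have := h.2.1 i hi
    simp only [yflip]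
    rw [show -(γ (i+1)).2 - -(γ i).2 = -((γ (i+1)).2 - (γ i).2) by ring, abs_neg]
    exact this
  · intro i hi j hj he
    apply h.2.2.1 i hi j hj
    simp only [yflip, Prod.ext_iff] at he ⊢
    exact ⟨he.1, by linarith [he.2]⟩
  · intro i hi
    simp only [yflip, h.2.2.2 i hi]
instance bridgeFinite (n : ℕ) : Finite {γ : ℕ → ℤ × ℤ // IsBridge n γ} :=
  finite_sub n _ (fun _ h => h.1)
lemma cSAW_subadd (a b : ℕ) : cSAW (a + b) ≤ cSAW a * cSAW b := by
  rw [cSAW, cSAW, cSAW, ← Nat.card_prod]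
  apply Nat.card_le_card_of_injective
    (fun γ : {γ // IsSAW (a+b) γ} =>
      ((⟨trunc γ.1 a, trunc_isSAW γ.2 (by omega)⟩, ⟨seg γ.1 a b, seg_isSAW γ.2 (by omega)⟩) :
        {γ // IsSAW a γ} × {γ // IsSAW b γ}))
  intro γ δ he
  simp only [Prod.ext_iff, Subtype.ext_iff] at he
  obtain ⟨h1, h2⟩ := he
  apply Subtype.ext; funext t
  rcases le_or_gt t a with ht | ht
  · have := congrFun h1 t
    simpa [trunc, min_eq_left ht] using this
  rcases le_or_gt t (a + b) with ht2 | ht2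
  · have e1 := congrFun h2 (t - a)
    have e2 := congrFun h1 a
    simp only [trunc, min_self] at e2
    simp only [seg, show min (t-a) b = t - a by omega, show a + (t-a) = t by omega] at e1
    have : γ.1 t = seg γ.1 a b (t-a) + γ.1 a := by
      simp [seg, show min (t-a) b = t - a by omega, show a + (t-a) = t by omega]
    rw [this]
    have : δ.1 t = seg δ.1 a b (t-a) + δ.1 a := by
      simp [seg, show min (t-a) b = t - a by omega, show a + (t-a) = t by omega]
    rw [this, ← e2]
    congr 1
    exact congrFun h2 (t-a)
  · have h3 := γ.2.2.2.2 t (by omega)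
    have h4 := δ.2.2.2.2 t (by omega)
    rw [h3, h4]
    have e1 := congrFun h2 b
    have e2 := congrFun h1 a
    simp only [trunc, min_self] at e2
    simp only [seg, min_self] at e1
    have : γ.1 (a+b) = (γ.1 (a+b) - γ.1 a) + γ.1 a := by ring
    rw [this, e1, e2]
    ring_nf
/-- concatenation of two bridges. -/
def bconcat (α β : ℕ → ℤ × ℤ) (a b : ℕ) : ℕ → ℤ × ℤ :=
  fun t => if t ≤ a then α t else α a + β (min t (a + b) - a)
lemma bridge_y {a : ℕ} {α : ℕ → ℤ × ℤ} (h : IsBridge a α) :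
    ∀ s ≤ a, 0 ≤ (α s).2 ∧ (α s).2 ≤ (α a).2 := by
  have hend : 0 ≤ (α a).2 := by
    rcases Nat.eq_zero_or_pos a with rfl | ha
    · simp [h.1.1]
    · exact le_of_lt (h.2 a ha le_rfl).1
  intro s hs
  rcases Nat.eq_zero_or_pos s with rfl | hs0
  · simp [h.1.1, hend]
  · exact ⟨le_of_lt (h.2 s hs0 hs).1, (h.2 s hs0 hs).2⟩
lemma bconcat_mid {α β : ℕ → ℤ × ℤ} {a b : ℕ} (hβ0 : β 0 = 0) {t : ℕ}
    (ht : a ≤ t) (ht2 : t ≤ a + b) : bconcat α β a b t = α a + β (t - a) := by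
  unfold bconcat
  rcases eq_or_lt_of_le ht with rfl | h
  · simp [hβ0]
  · rw [if_neg (by omega), min_eq_left ht2]
lemma bconcat_isBridge {a b : ℕ} {α β : ℕ → ℤ × ℤ} (hα : IsBridge a α) (hβ : IsBridge b β) :
    IsBridge (a + b) (bconcat α β a b) := by
  have hβ0 : β 0 = 0 := by simpa [Prod.ext_iff] using hβ.1.1
  have hmid : ∀ t, a ≤ t → t ≤ a + b → bconcat α β a b t = α a + β (t - a) :=
    fun t h1 h2 => bconcat_mid hβ0 h1 h2
  have hlow : ∀ t, t ≤ a → bconcat α β a b t = α t := by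
    intro t ht; simp [bconcat, ht]
  have hya := bridge_y hα
  have hyb := bridge_y hβ
  have hend : bconcat α β a b (a+b) = α a + β b := by
    rw [hmid (a+b) (by omega) le_rfl, show a + b - a = b by omega]
  have hhi : ∀ i, a + b ≤ i → bconcat α β a b i = α a + β b := by
    intro i hi
    unfold bconcat
    split
    · have hb : b = 0 := by omega
      have hia : i = a := by omega
      subst hb hia
      simp [hβ0]
    · rw [min_eq_right (by omega), show a + b - a = b by omega]
  refine ⟨⟨?_, ?_, ?_, ?_⟩, ?_⟩
  · rw [hlow 0 (by omega)]; exact hα.1.1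
  · intro i hi
    rcases lt_or_ge i a with h | h
    · rw [hlow i (by omega), hlow (i+1) (by omega)]
      exact hα.1.2.1 i h
    · rw [hmid i h (by omega), hmid (i+1) (by omega) (by omega)]
      simp only [Prod.fst_add, Prod.snd_add]
      have e : i + 1 - a = (i - a) + 1 := by omega
      rw [e]
      have := hβ.1.2.1 (i - a) (by omega)
      convert this using 3 <;> ring
  · intro i hi j hj he
    rcases le_or_gt i a with h1 | h1 <;> rcases le_or_gt j a with h2 | h2
    · rw [hlow i h1, hlow j h2] at he
      exact hα.1.2.2.1 i (by omega) j (by omega) he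
    · exfalso
      rw [hlow i h1, hmid j (by omega) hj] at he
      have y1 : (α i).2 ≤ (α a).2 := (hya i h1).2
      have y2 : 0 < (β (j - a)).2 := (hβ.2 (j-a) (by omega) (by omega)).1
      have := congrArg Prod.snd he
      simp only [Prod.snd_add] at this
      omega
    · exfalso
      rw [hlow j h2, hmid i (by omega) hi] at he
      have y1 : (α j).2 ≤ (α a).2 := (hya j h2).2
      have y2 : 0 < (β (i - a)).2 := (hβ.2 (i-a) (by omega) (by omega)).1
      have := congrArg Prod.snd he
      simp only [Prod.snd_add] at this
      omega
    · rw [hmid i (by omega) hi, hmid j (by omega) hj, add_right_inj] at he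
      have := hβ.1.2.2.1 (i-a) (by omega) (j-a) (by omega) he
      omega
  · intro i hi
    rw [hend, hhi i hi]
  · intro t ht hta
    rw [hend]
    rcases le_or_gt t a with h | h
    · rw [hlow t h]
      constructor
      · exact (hα.2 t ht h).1
      · have := (hya t h).2
        have := (hyb b le_rfl).1
        simp only [Prod.snd_add]; omega
    · rw [hmid t (by omega) hta]
      have y2 : 0 < (β (t - a)).2 := (hβ.2 (t-a) (by omega) (by omega)).1
      have y3 : (β (t-a)).2 ≤ (β b).2 := (hyb (t-a) (by omega)).2
      have y4 : 0 ≤ (α a).2 := (hya a le_rfl).1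
      simp only [Prod.snd_add]
      omega
lemma cSAB_supermult (a b : ℕ) : cSAB a * cSAB b ≤ cSAB (a + b) := by
  rw [cSAB, cSAB, cSAB, ← Nat.card_prod]
  apply Nat.card_le_card_of_injective
    (fun p : {γ // IsBridge a γ} × {γ // IsBridge b γ} =>
      (⟨bconcat p.1.1 p.2.1 a b, bconcat_isBridge p.1.2 p.2.2⟩ : {γ // IsBridge (a+b) γ}))
  rintro ⟨⟨α, hα⟩, ⟨β, hβ⟩⟩ ⟨⟨α', hα'⟩, ⟨β', hβ'⟩⟩ he
  simp only [Subtype.ext_iff] at he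
  have hβ0 : β 0 = 0 := by simpa [Prod.ext_iff] using hβ.1.1
  have hβ0' : β' 0 = 0 := by simpa [Prod.ext_iff] using hβ'.1.1
  have hαe : α = α' := by
    funext t
    rcases le_or_gt t a with h | h
    · have := congrFun he t
      simpa [bconcat, h] using this
    · rw [hα.1.2.2.2 t (by omega), hα'.1.2.2.2 t (by omega)]
      have := congrFun he a
      simpa [bconcat] using this
  have haa : α a = α' a := by rw [hαe]
  simp only [Prod.mk.injEq, Subtype.ext_iff]
  refine ⟨hαe, ?_⟩
  funext t
  rcases le_or_gt t b with h | h
  · have e1 := congrFun he (a + t)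
    rw [bconcat_mid hβ0 (by omega) (by omega), bconcat_mid hβ0' (by omega) (by omega), haa,
      add_right_inj, show a + t - a = t by omega] at e1
    exact e1
  · rw [hβ.1.2.2.2 t (by omega), hβ'.1.2.2.2 t (by omega)]
    have e1 := congrFun he (a + b)
    rw [bconcat_mid hβ0 (by omega) (by omega), bconcat_mid hβ0' (by omega) (by omega), haa,
      add_right_inj, show a + b - a = b by omega] at e1
    exact e1
lemma cSAB_le_cSAW (n : ℕ) : cSAB n ≤ cSAW n := by
  rw [cSAB, cSAW]
  exact Nat.card_le_card_of_injective
    (fun γ : {γ // IsBridge n γ} => (⟨γ.1, γ.2.1⟩ : {γ // IsSAW n γ}))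
    (fun a b hab => by simpa [Subtype.ext_iff] using hab)
lemma cSAW_zero : cSAW 0 = 1 := by
  rw [cSAW]
  rw [Nat.card_eq_one_iff_unique]
  constructor
  · constructor
    rintro ⟨γ, hγ⟩ ⟨δ, hδ⟩
    apply Subtype.ext; funext t
    show γ t = δ t
    rw [hγ.2.2.2 t (by omega), hδ.2.2.2 t (by omega), hγ.1, hδ.1]
  · exact ⟨⟨fun _ => (0,0), by refine ⟨rfl, ?_, ?_, ?_⟩ <;> intros <;> first | rfl | omega⟩⟩
lemma cSAB_one_le (n : ℕ) : 1 ≤ cSAB n := by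
  have hbr : IsBridge n (fun t => ((0:ℤ), ((min t n : ℕ) : ℤ))) := by
    refine ⟨⟨by simp, ?_, ?_, ?_⟩, ?_⟩
    · intro i hi
      simp only
      rw [show min (i+1) n = i+1 by omega, show min i n = i by omega]
      push_cast
      simp
    · intro i hi j hj he
      simp only [Prod.mk.injEq, Nat.cast_inj] at he
      omega
    · intro i hi
      have hmin : min i n = n := by omega
      simp [hmin]
    · intro k hk hkn
      simp only
      constructor
      · rw [show min k n = k by omega]; exact_mod_cast hk
      · rw [show min k n = k by omega, min_self]; exact_mod_cast hkn
  have : Nonempty {γ : ℕ → ℤ × ℤ // IsBridge n γ} := ⟨⟨_, hbr⟩⟩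
  rw [cSAB]
  exact Nat.one_le_iff_ne_zero.mpr (Nat.card_ne_zero.mpr ⟨this, bridgeFinite n⟩)
lemma cSAW_pow (n m : ℕ) : cSAW (n * m) ≤ cSAW n ^ m := by
  induction m with
  | zero => simp [cSAW_zero]
  | succ m ih =>
    calc cSAW (n * (m+1)) = cSAW (n * m + n) := by ring_nf
    _ ≤ cSAW (n * m) * cSAW n := cSAW_subadd _ _
    _ ≤ cSAW n ^ m * cSAW n := Nat.mul_le_mul_right _ ih
    _ = cSAW n ^ (m+1) := by ring
lemma cSAB_pow (j m : ℕ) : cSAB j ^ m ≤ cSAB (j * m) := by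
  induction m with
  | zero => simpa using cSAB_one_le 0
  | succ m ih =>
    calc cSAB j ^ (m+1) = cSAB j ^ m * cSAB j := by ring
    _ ≤ cSAB (j * m) * cSAB j := Nat.mul_le_mul_right _ ih
    _ ≤ cSAB (j * m + j) := cSAB_supermult _ _
    _ = cSAB (j * (m+1)) := by ring_nf
lemma mu_nonneg : 0 ≤ mu :=
  le_ciInf fun n => Real.rpow_nonneg (Nat.cast_nonneg _) _
lemma cSAB_le_mu_pow (j : ℕ) : (cSAB j : ℝ) ≤ mu ^ j := by
  rcases Nat.eq_zero_or_pos j with rfl | hj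
  · have h1 : cSAB 0 = 1 :=
      Nat.le_antisymm ((cSAB_le_cSAW 0).trans cSAW_zero.le) (cSAB_one_le 0)
    simp [h1]
  have hX : (0:ℝ) ≤ (cSAB j : ℝ) := Nat.cast_nonneg _
  have hj0 : (j:ℝ) ≠ 0 := by positivity
  have key : ∀ n : ℕ, ((cSAB j : ℝ)) ^ ((1:ℝ)/j) ≤ ((cSAW (n+1) : ℝ)) ^ ((1:ℝ)/((n:ℝ)+1)) := by
    intro n
    have hY : (0:ℝ) ≤ (cSAW (n+1) : ℝ) := Nat.cast_nonneg _
    have hnat : cSAB j ^ (n+1) ≤ cSAW (n+1) ^ j := by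
      calc cSAB j ^ (n+1) ≤ cSAB (j * (n+1)) := cSAB_pow j (n+1)
      _ ≤ cSAW (j * (n+1)) := cSAB_le_cSAW _
      _ = cSAW ((n+1) * j) := by ring_nf
      _ ≤ cSAW (n+1) ^ j := cSAW_pow (n+1) j
    have hreal : ((cSAB j : ℝ)) ^ (((n:ℝ)+1)) ≤ ((cSAW (n+1) : ℝ)) ^ ((j:ℝ)) := by
      rw [show ((n:ℝ)+1) = (((n+1:ℕ)):ℝ) by push_cast; ring, Real.rpow_natCast,
        Real.rpow_natCast]
      exact_mod_cast hnat
    have h1 : (0:ℝ) < 1 / ((j:ℝ) * ((n:ℝ)+1)) := by positivity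
    have h2 := Real.rpow_le_rpow (Real.rpow_nonneg hX _) hreal h1.le
    rw [← Real.rpow_mul hX, ← Real.rpow_mul hY] at h2
    have e1 : ((n:ℝ)+1) * (1/((j:ℝ)*((n:ℝ)+1))) = 1/(j:ℝ) := by
      field_simp
    have e2 : (j:ℝ) * (1/((j:ℝ)*((n:ℝ)+1))) = 1/((n:ℝ)+1) := by
      field_simp
    rw [e1, e2] at h2
    exact h2
  have hle : ((cSAB j : ℝ)) ^ ((1:ℝ)/j) ≤ mu := le_ciInf key
  have hrw : (cSAB j : ℝ) = (((cSAB j : ℝ)) ^ ((1:ℝ)/j)) ^ j := by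
    rw [← Real.rpow_natCast (((cSAB j : ℝ)) ^ ((1:ℝ)/j)) j, ← Real.rpow_mul hX,
      one_div, inv_mul_cancel₀ hj0, Real.rpow_one]
  rw [hrw]
  exact pow_le_pow_left₀ (Real.rpow_nonneg hX _) hle j
/-- The defining set of `nextRecord`. -/
def nrSet (γ : ℕ → ℤ × ℤ) (n a : ℕ) (tm : Bool) : Set ℕ :=
  {t : ℕ | a ≤ t ∧ t ≤ n ∧ ∀ s : ℕ, a ≤ s → s ≤ n →
    cond tm ((γ s).2 ≤ (γ t).2) ((γ t).2 ≤ (γ s).2)}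
lemma nextRecord_eq_sSup (γ : ℕ → ℤ × ℤ) (n a : ℕ) (tm : Bool) :
    nextRecord γ n a tm = sSup (nrSet γ n a tm) := rfl
lemma nrSet_bdd (γ : ℕ → ℤ × ℤ) (n a : ℕ) (tm : Bool) : BddAbove (nrSet γ n a tm) :=
  ⟨n, fun _ ht => ht.2.1⟩
lemma nrSet_nonempty {γ : ℕ → ℤ × ℤ} {n a : ℕ} (ha : a ≤ n) (tm : Bool) :
    (nrSet γ n a tm).Nonempty := by
  cases tm
  · obtain ⟨t0, ht0, hopt⟩ := Finset.exists_min_image (Finset.Icc a n) (fun s => (γ s).2)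
      ⟨a, Finset.mem_Icc.2 ⟨le_rfl, ha⟩⟩
    rw [Finset.mem_Icc] at ht0
    exact ⟨t0, ht0.1, ht0.2, fun s hs1 hs2 => hopt s (Finset.mem_Icc.2 ⟨hs1, hs2⟩)⟩
  · obtain ⟨t0, ht0, hopt⟩ := Finset.exists_max_image (Finset.Icc a n) (fun s => (γ s).2)
      ⟨a, Finset.mem_Icc.2 ⟨le_rfl, ha⟩⟩
    rw [Finset.mem_Icc] at ht0
    exact ⟨t0, ht0.1, ht0.2, fun s hs1 hs2 => hopt s (Finset.mem_Icc.2 ⟨hs1, hs2⟩)⟩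
lemma nextRecord_mem {γ : ℕ → ℤ × ℤ} {n a : ℕ} (ha : a ≤ n) (tm : Bool) :
    nextRecord γ n a tm ∈ nrSet γ n a tm :=
  Nat.sSup_mem (nrSet_nonempty ha tm) (nrSet_bdd γ n a tm)
lemma nextRecord_strict {γ : ℕ → ℤ × ℤ} {n a : ℕ} (ha : a ≤ n) (tm : Bool) {t : ℕ}
    (h1 : nextRecord γ n a tm < t) (h2 : t ≤ n) :
    cond tm ((γ t).2 < (γ (nextRecord γ n a tm)).2)
      ((γ (nextRecord γ n a tm)).2 < (γ t).2) := by
  obtain ⟨hm1, hm2, hm3⟩ := nextRecord_mem (γ := γ) ha tm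
  have hat : a ≤ t := le_trans hm1 (le_of_lt h1)
  have hne : (γ t).2 ≠ (γ (nextRecord γ n a tm)).2 := by
    intro he
    have htS : t ∈ nrSet γ n a tm := by
      refine ⟨hat, h2, fun s hs1 hs2 => ?_⟩
      have := hm3 s hs1 hs2
      cases tm <;> simp_all
    have := le_csSup (nrSet_bdd γ n a tm) htS
    rw [← nextRecord_eq_sSup] at this
    omega
  have hle2 := hm3 t hat h2
  cases tm <;> simp only [cond] at hle2 ⊢ <;> omega
lemma nextRecord_self (γ : ℕ → ℤ × ℤ) (n : ℕ) (tm : Bool) : nextRecord γ n n tm = n := by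
  obtain ⟨hm1, hm2, _⟩ := nextRecord_mem (γ := γ) (n := n) (a := n) le_rfl tm
  omega
lemma record_le (γ : ℕ → ℤ × ℤ) (k : ℕ) (j : ℕ) : recordTime γ k j ≤ k := by
  induction j with
  | zero => simp [recordTime]
  | succ j ih => exact (nextRecord_mem ih _).2.1
lemma parity_succ (j : ℕ) : ((j + 1) % 2 == 0) = !(j % 2 == 0) := by
  rcases Nat.mod_two_eq_zero_or_one j with h | h <;> simp [Nat.add_mod, h]
lemma record_strict {γ : ℕ → ℤ × ℤ} {k : ℕ} (hγ : IsHSW k γ) (j : ℕ) {t : ℕ}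
    (h1 : recordTime γ k j < t) (h2 : t ≤ k) :
    cond (j % 2 == 0) ((γ (recordTime γ k j)).2 < (γ t).2)
      ((γ t).2 < (γ (recordTime γ k j)).2) := by
  cases j with
  | zero =>
    simp only [recordTime] at h1 ⊢
    simp only [Nat.zero_mod]
    have := hγ.2 t h1 h2
    have h0 : (γ 0).2 = 0 := by rw [hγ.1.1]
    simp [h0, this]
  | succ j =>
    have hle := record_le γ k j
    have := nextRecord_strict (γ := γ) hle (j % 2 == 0) (t := t) h1 h2
    rw [parity_succ]
    cases h : (j % 2 == 0) <;> simp_all [recordTime]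
lemma record_grow {γ : ℕ → ℤ × ℤ} {k : ℕ} (hγ : IsHSW k γ) (j : ℕ)
    (h : recordTime γ k j < k) : recordTime γ k j < recordTime γ k (j + 1) := by
  have hle := record_le γ k j
  obtain ⟨hm1, hm2, hm3⟩ := nextRecord_mem (γ := γ) hle (j % 2 == 0)
  have hs := record_strict hγ j (t := k) h le_rfl
  have hopt := hm3 k hle le_rfl
  rcases Nat.lt_or_ge (recordTime γ k j) (recordTime γ k (j+1)) with h' | h'
  · exact h'
  have heq : recordTime γ k (j+1) = recordTime γ k j := le_antisymm h' hm1
  exfalso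
  rw [show recordTime γ k (j+1) = nextRecord γ k (recordTime γ k j) (j % 2 == 0) from rfl]
    at heq
  cases hb : (j % 2 == 0) <;> simp only [hb, cond] at hs hopt heq <;>
    rw [heq] at hopt <;> omega
lemma record_reach {γ : ℕ → ℤ × ℤ} {k : ℕ} (hγ : IsHSW k γ) : recordTime γ k k = k := by
  have claim : ∀ j, recordTime γ k j = k ∨ j ≤ recordTime γ k j := by
    intro j
    induction j with
    | zero => right; exact Nat.zero_le _
    | succ j ih =>
      rcases ih with h | h
      · left
        show nextRecord γ k (recordTime γ k j) _ = k
        rw [h]; exact nextRecord_self γ k _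
      · rcases Nat.eq_or_lt_of_le (record_le γ k j) with he | hlt
        · left
          show nextRecord γ k (recordTime γ k j) _ = k
          rw [he]; exact nextRecord_self γ k _
        · right
          have := record_grow hγ j hlt
          omega
  rcases claim k with h | h
  · exact h
  · exact le_antisymm (record_le γ k k) h
lemma record_persist {γ : ℕ → ℤ × ℤ} {k : ℕ} {j m : ℕ}
    (hj : recordTime γ k j = k) (hm : j ≤ m) : recordTime γ k m = k := by
  induction m, hm using Nat.le_induction with
  | base => exact hj
  | succ m hm ih =>
    show nextRecord γ k (recordTime γ k m) _ = k
    rw [ih]; exact nextRecord_self γ k _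
lemma numBranches_reach {γ : ℕ → ℤ × ℤ} {k : ℕ} (hγ : IsHSW k γ) {m : ℕ}
    (h : numBranches γ k ≤ m) : recordTime γ k m = k := by
  have hne : {j : ℕ | recordTime γ k j = k}.Nonempty := ⟨k, record_reach hγ⟩
  have := Nat.sInf_mem hne
  exact record_persist this h
/-- the reflected translated walk after time `a`. -/
def segflip (γ : ℕ → ℤ × ℤ) (a L : ℕ) : ℕ → ℤ × ℤ :=
  fun t => ((γ (a + min t L)).1 - (γ a).1, (γ a).2 - (γ (a + min t L)).2)
lemma segflip_eq_yflip_seg (γ : ℕ → ℤ × ℤ) (a L : ℕ) :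
    segflip γ a L = yflip (seg γ a L) := by
  funext t
  simp only [segflip, yflip, seg, Prod.fst_sub, Prod.snd_sub, Prod.ext_iff]
  exact ⟨trivial, by ring⟩
lemma segflip_isSAW {n : ℕ} {γ : ℕ → ℤ × ℤ} (h : IsSAW n γ) {a L : ℕ} (h2 : a + L ≤ n) :
    IsSAW L (segflip γ a L) := by
  rw [segflip_eq_yflip_seg]
  exact yflip_isSAW (seg_isSAW h h2)
lemma nrSet_segflip {γ : ℕ → ℤ × ℤ} {k a b : ℕ} (hab : a ≤ b) (hbk : b ≤ k) (tm : Bool) :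
    ∀ t, t ∈ nrSet (segflip γ a (k-a)) (k-a) (b-a) tm ↔ a + t ∈ nrSet γ k b (!tm) := by
  intro t
  have hval : ∀ u, u ≤ k - a → (segflip γ a (k-a) u).2 = (γ a).2 - (γ (a+u)).2 := by
    intro u hu
    simp [segflip, min_eq_left hu]
  constructor
  · rintro ⟨h1, h2, h3⟩
    refine ⟨by omega, by omega, fun s hs1 hs2 => ?_⟩
    have := h3 (s - a) (by omega) (by omega)
    rw [hval (s-a) (by omega), hval t h2, show a + (s-a) = s by omega] at this
    cases tm <;> simp only [cond, Bool.not_true, Bool.not_false] at this ⊢ <;> omega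
  · rintro ⟨h1, h2, h3⟩
    refine ⟨by omega, by omega, fun s hs1 hs2 => ?_⟩
    have := h3 (a + s) (by omega) (by omega)
    rw [hval s hs2, hval t (by omega)]
    cases tm <;> simp only [cond, Bool.not_true, Bool.not_false] at this ⊢ <;> omega
lemma nextRecord_segflip {γ : ℕ → ℤ × ℤ} {k a b : ℕ} (hab : a ≤ b) (hbk : b ≤ k) (tm : Bool) :
    nextRecord (segflip γ a (k-a)) (k-a) (b-a) tm = nextRecord γ k b (!tm) - a := by
  have hiff := nrSet_segflip (γ := γ) hab hbk tm
  have hmem : nextRecord γ k b (!tm) ∈ nrSet γ k b (!tm) := nextRecord_mem hbk (!tm)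
  have har : a ≤ nextRecord γ k b (!tm) := le_trans hab hmem.1
  have h1 : nextRecord γ k b (!tm) - a ∈ nrSet (segflip γ a (k-a)) (k-a) (b-a) tm := by
    rw [hiff]
    rw [show a + (nextRecord γ k b (!tm) - a) = nextRecord γ k b (!tm) by omega]
    exact hmem
  rw [nextRecord_eq_sSup]
  apply le_antisymm
  · apply csSup_le ⟨_, h1⟩
    intro t ht
    have := le_csSup (nrSet_bdd γ k b (!tm)) ((hiff t).mp ht)
    rw [← nextRecord_eq_sSup] at this
    omega
  · exact le_csSup (nrSet_bdd _ _ _ _) h1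
lemma recordTime_segflip (γ : ℕ → ℤ × ℤ) (k : ℕ) (j : ℕ) :
    recordTime γ k 1 ≤ recordTime γ k (j+1) ∧
    recordTime (segflip γ (recordTime γ k 1) (k - recordTime γ k 1)) (k - recordTime γ k 1) j
      = recordTime γ k (j+1) - recordTime γ k 1 := by
  set a := recordTime γ k 1 with ha
  induction j with
  | zero =>
    refine ⟨le_rfl, ?_⟩
    show (0:ℕ) = recordTime γ k 1 - recordTime γ k 1
    omega
  | succ j ih =>
    obtain ⟨ih1, ih2⟩ := ih
    have hbk : recordTime γ k (j+1) ≤ k := record_le γ k (j+1)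
    have hmem := (nextRecord_mem (γ := γ) hbk ((j+1) % 2 == 0)).1
    constructor
    · show a ≤ nextRecord γ k (recordTime γ k (j+1)) ((j+1) % 2 == 0)
      omega
    · show nextRecord (segflip γ a (k-a)) (k-a)
          (recordTime (segflip γ a (k-a)) (k-a) j) (j % 2 == 0)
        = nextRecord γ k (recordTime γ k (j+1)) ((j+1) % 2 == 0) - a
      rw [ih2, nextRecord_segflip ih1 hbk, parity_succ]
lemma trunc_isBridge {γ : ℕ → ℤ × ℤ} {k : ℕ} (hγ : IsHSW k γ) :
    IsBridge (recordTime γ k 1) (trunc γ (recordTime γ k 1)) := by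
  set a := recordTime γ k 1 with ha
  have hak : a ≤ k := record_le γ k 1
  have hmem : a ∈ nrSet γ k 0 true := by
    have h0 : a = nextRecord γ k 0 true := by rw [ha]; rfl
    rw [h0]
    exact nextRecord_mem (by omega) true
  refine ⟨trunc_isSAW hγ.1 hak, ?_⟩
  intro t ht hta
  have h1 : 0 < (γ t).2 := hγ.2 t ht (by omega)
  have h2 := hmem.2.2 t (by omega) (by omega)
  simp only [cond] at h2
  constructor
  · simpa [trunc, min_eq_left hta] using h1
  · simp only [trunc, min_eq_left hta, min_self]
    exact h2
lemma segflip_isHSW {γ : ℕ → ℤ × ℤ} {k : ℕ} (hγ : IsHSW k γ) :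
    IsHSW (k - recordTime γ k 1) (segflip γ (recordTime γ k 1) (k - recordTime γ k 1)) := by
  set a := recordTime γ k 1 with ha
  have hak : a ≤ k := record_le γ k 1
  refine ⟨segflip_isSAW hγ.1 (by omega), ?_⟩
  intro t ht htk
  have hs := record_strict hγ 1 (t := a + t) (by omega) (by omega)
  simp only [show (1 % 2 == 0) = false from rfl, cond] at hs
  rw [← ha] at hs
  simp only [segflip, min_eq_left htk]
  omega
lemma nat_card_sigma {n : ℕ} (F : Fin n → Type) [inst : ∀ i, Finite (F i)] :
    Nat.card ((i : Fin n) × F i) = ∑ i, Nat.card (F i) := by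
  have := fun i => Fintype.ofFinite (F i)
  simp [Nat.card_eq_fintype_card, Fintype.card_sigma]
lemma peel (m k : ℕ) :
    Nat.card {γ : ℕ → ℤ × ℤ // IsHSW k γ ∧ recordTime γ k (m+1) = k} ≤
      ∑ a : Fin (k+1), cSAB a *
        Nat.card {δ : ℕ → ℤ × ℤ // IsHSW (k - (a:ℕ)) δ ∧
          recordTime δ (k - (a:ℕ)) m = k - (a:ℕ)} := by
  classical
  let D : Fin (k+1) → Type := fun a =>
    {β : ℕ → ℤ × ℤ // IsBridge (a:ℕ) β} ×
      {δ : ℕ → ℤ × ℤ // IsHSW (k - (a:ℕ)) δ ∧ recordTime δ (k - (a:ℕ)) m = k - (a:ℕ)}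
  haveI hD : ∀ a : Fin (k+1), Finite (D a) := by
    intro a
    haveI h1 : Finite {β : ℕ → ℤ × ℤ // IsBridge (a:ℕ) β} := bridgeFinite (a:ℕ)
    haveI h2 : Finite {δ : ℕ → ℤ × ℤ // IsHSW (k - (a:ℕ)) δ ∧
        recordTime δ (k - (a:ℕ)) m = k - (a:ℕ)} :=
      finite_sub (k - (a:ℕ)) _ (fun γ h => h.1.1)
    infer_instance
  have hmain : Nat.card {γ : ℕ → ℤ × ℤ // IsHSW k γ ∧ recordTime γ k (m+1) = k}
      ≤ Nat.card ((a : Fin (k+1)) × D a) := by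
    apply Nat.card_le_card_of_injective
      (fun γs : {γ : ℕ → ℤ × ℤ // IsHSW k γ ∧ recordTime γ k (m+1) = k} =>
        (⟨⟨recordTime γs.1 k 1, Nat.lt_succ_of_le (record_le γs.1 k 1)⟩,
          ⟨trunc γs.1 (recordTime γs.1 k 1), trunc_isBridge γs.2.1⟩,
          ⟨segflip γs.1 (recordTime γs.1 k 1) (k - recordTime γs.1 k 1),
            segflip_isHSW γs.2.1, by
              have h := recordTime_segflip γs.1 k m
              rw [h.2, γs.2.2]⟩⟩ : (a : Fin (k+1)) × D a))
    intro γ1 γ2 he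
    have hg := congrArg (fun x : (a : Fin (k+1)) × D a =>
      (((x.1 : ℕ), x.2.1.1, x.2.2.1) : ℕ × (ℕ → ℤ × ℤ) × (ℕ → ℤ × ℤ))) he
    simp only [Prod.ext_iff] at hg
    obtain ⟨h1, h2, h3⟩ := hg
    set a := recordTime γ1.1 k 1 with hadef
    rw [← h1] at h2 h3
    have hak : a ≤ k := record_le γ1.1 k 1
    have hkey : ∀ t, t ≤ k → γ1.1 t = γ2.1 t := by
      intro t htk
      rcases le_or_gt t a with hta | hta
      · have := congrFun h2 t
        simpa [trunc, min_eq_left hta] using this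
      · have haa : γ1.1 a = γ2.1 a := by
          have := congrFun h2 a
          simpa [trunc] using this
        have := congrFun h3 (t - a)
        simp only [segflip, min_eq_left (show t - a ≤ k - a by omega),
          show a + (t - a) = t by omega, Prod.ext_iff] at this
        obtain ⟨e1, e2⟩ := this
        have haa1 : (γ1.1 a).1 = (γ2.1 a).1 := by rw [haa]
        have haa2 : (γ1.1 a).2 = (γ2.1 a).2 := by rw [haa]
        have : (γ1.1 t).1 = (γ2.1 t).1 := by omega
        have h22 : (γ1.1 t).2 = (γ2.1 t).2 := by omega
        exact Prod.ext this h22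
    apply Subtype.ext; funext t
    rcases le_or_gt t k with htk | htk
    · exact hkey t htk
    · rw [γ1.2.1.1.2.2.2 t (by omega), γ2.2.1.1.2.2.2 t (by omega)]
      exact hkey k le_rfl
  calc Nat.card {γ : ℕ → ℤ × ℤ // IsHSW k γ ∧ recordTime γ k (m+1) = k}
      ≤ Nat.card ((a : Fin (k+1)) × D a) := hmain
    _ = ∑ a : Fin (k+1), Nat.card (D a) := nat_card_sigma D
    _ = ∑ a : Fin (k+1), cSAB a * Nat.card {δ : ℕ → ℤ × ℤ // IsHSW (k - (a:ℕ)) δ ∧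
          recordTime δ (k - (a:ℕ)) m = k - (a:ℕ)} := by
        apply Finset.sum_congr rfl
        intro a _
        rw [show D a = ({β : ℕ → ℤ × ℤ // IsBridge (a:ℕ) β} ×
          {δ : ℕ → ℤ × ℤ // IsHSW (k - (a:ℕ)) δ ∧
            recordTime δ (k - (a:ℕ)) m = k - (a:ℕ)}) from rfl, Nat.card_prod]
        rfl
lemma count_le (m : ℕ) : ∀ k : ℕ,
    (Nat.card {γ : ℕ → ℤ × ℤ // IsHSW k γ ∧ recordTime γ k m = k} : ℝ) ≤
      ((k:ℝ)+1)^m * mu^k := by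
  induction m with
  | zero =>
    intro k
    rcases Nat.eq_zero_or_pos k with rfl | hk
    · haveI hsub : Subsingleton {γ : ℕ → ℤ × ℤ // IsHSW 0 γ ∧ recordTime γ 0 0 = 0} := by
        constructor
        rintro ⟨γ, hγ, _⟩ ⟨δ, hδ, _⟩
        apply Subtype.ext; funext t
        show γ t = δ t
        rw [hγ.1.2.2.2 t (by omega), hδ.1.2.2.2 t (by omega), hγ.1.1, hδ.1.1]
      have hle : Nat.card {γ : ℕ → ℤ × ℤ // IsHSW 0 γ ∧ recordTime γ 0 0 = 0} ≤ 1 := by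
        rcases isEmpty_or_nonempty {γ : ℕ → ℤ × ℤ // IsHSW 0 γ ∧ recordTime γ 0 0 = 0}
          with he | hne
        · simp [Nat.card_of_isEmpty]
        · obtain ⟨x⟩ := hne
          rw [Nat.card_of_subsingleton x]
      simp only [Nat.cast_zero, pow_zero, zero_add, one_pow, mul_one, one_mul]
      exact_mod_cast hle
    · haveI hempty : IsEmpty {γ : ℕ → ℤ × ℤ // IsHSW k γ ∧ recordTime γ k 0 = k} := by
        constructor
        rintro ⟨γ, hγ, h0⟩
        have : recordTime γ k 0 = 0 := rfl
        omega
      rw [Nat.card_of_isEmpty]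
      push_cast
      have := pow_nonneg mu_nonneg k
      nlinarith [pow_pos (show (0:ℝ) < (k:ℝ)+1 by positivity) 0]
  | succ m ih =>
    intro k
    have hpeel := peel m k
    have hcast : (Nat.card {γ : ℕ → ℤ × ℤ // IsHSW k γ ∧ recordTime γ k (m+1) = k} : ℝ)
        ≤ ∑ a : Fin (k+1), (cSAB (a:ℕ) : ℝ) *
          (Nat.card {δ : ℕ → ℤ × ℤ // IsHSW (k - (a:ℕ)) δ ∧
            recordTime δ (k - (a:ℕ)) m = k - (a:ℕ)} : ℝ) := by
      have := (Nat.cast_le (α := ℝ)).mpr hpeel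
      push_cast at this
      exact this
    refine le_trans hcast ?_
    have hbound : ∀ a : Fin (k+1), (cSAB (a:ℕ) : ℝ) *
        (Nat.card {δ : ℕ → ℤ × ℤ // IsHSW (k - (a:ℕ)) δ ∧
          recordTime δ (k - (a:ℕ)) m = k - (a:ℕ)} : ℝ) ≤ ((k:ℝ)+1)^m * mu^k := by
      intro a
      have ha : (a:ℕ) ≤ k := Nat.lt_succ_iff.mp a.2
      have h1 := cSAB_le_mu_pow (a:ℕ)
      have h2 := ih (k - (a:ℕ))
      calc (cSAB (a:ℕ) : ℝ) * (Nat.card _ : ℝ)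
          ≤ mu^(a:ℕ) * ((((k - (a:ℕ) : ℕ)):ℝ)+1)^m * mu^(k - (a:ℕ)) :=
            by
              have := mul_le_mul h1 h2 (Nat.cast_nonneg _) (pow_nonneg mu_nonneg _)
              calc (cSAB (a:ℕ) : ℝ) * _ ≤ _ := this
              _ = mu^(a:ℕ) * ((((k - (a:ℕ) : ℕ)):ℝ)+1)^m * mu^(k - (a:ℕ)) := by ring
        _ = ((((k - (a:ℕ) : ℕ)):ℝ)+1)^m * mu^((a:ℕ) + (k - (a:ℕ))) := by
            rw [pow_add]; ring
        _ ≤ ((k:ℝ)+1)^m * mu^k := by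
            rw [show (a:ℕ) + (k - (a:ℕ)) = k by omega]
            apply mul_le_mul_of_nonneg_right _ (pow_nonneg mu_nonneg k)
            apply pow_le_pow_left₀ (by positivity)
            have : ((k - (a:ℕ) : ℕ):ℝ) ≤ (k:ℝ) := Nat.cast_le.mpr (by omega)
            linarith
    calc ∑ a : Fin (k+1), (cSAB (a:ℕ) : ℝ) *
          (Nat.card {δ : ℕ → ℤ × ℤ // IsHSW (k - (a:ℕ)) δ ∧
            recordTime δ (k - (a:ℕ)) m = k - (a:ℕ)} : ℝ)
        ≤ ∑ _a : Fin (k+1), ((k:ℝ)+1)^m * mu^k :=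
          Finset.sum_le_sum (fun a _ => hbound a)
      _ = ((k:ℝ)+1)^(m+1) * mu^k := by
          rw [Finset.sum_const, Finset.card_univ, Fintype.card_fin]
          push_cast
          ring

/-- Walks with few branches are rare: for every `ε ∈ (0, 1/2)` and all large enough `n`,
for every `k ≤ n`, the number of half-space walks of length `k` with fewer than
`7 n^{1/2−ε}` branches is at most `exp(8 n^{1/2−ε} log n) μ^k`. -/
theorem few_branches_bound (ε : ℝ) (hε0 : 0 < ε) (hε1 : ε < 1 / 2) :
    ∃ N : ℕ, ∀ n : ℕ, N ≤ n → ∀ k : ℕ, k ≤ n →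
      (Nat.card {γ : ℕ → ℤ × ℤ // IsHSW k γ ∧
          (numBranches γ k : ℝ) < 7 * (n : ℝ) ^ ((1 : ℝ) / 2 - ε)} : ℝ)
        ≤ Real.exp (8 * (n : ℝ) ^ ((1 : ℝ) / 2 - ε) * Real.log n) * mu ^ k := by
  refine ⟨128, fun n hn k hk => ?_⟩
  set de : ℝ := (1:ℝ)/2 - ε with hde
  have hden : (0:ℝ) ≤ (n:ℝ) ^ de := Real.rpow_nonneg (Nat.cast_nonneg n) de
  set M : ℕ := ⌊(7:ℝ) * (n:ℝ) ^ de⌋₊ with hM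
  -- step 1 : inclusion
  haveI : Finite {γ : ℕ → ℤ × ℤ // IsHSW k γ ∧ recordTime γ k M = k} :=
    finite_sub k _ (fun γ h => h.1.1)
  have step1 : Nat.card {γ : ℕ → ℤ × ℤ // IsHSW k γ ∧
      (numBranches γ k : ℝ) < 7 * (n : ℝ) ^ ((1 : ℝ) / 2 - ε)}
      ≤ Nat.card {γ : ℕ → ℤ × ℤ // IsHSW k γ ∧ recordTime γ k M = k} := by
    apply Nat.card_le_card_of_injective
      (fun γs => ⟨γs.1, γs.2.1, numBranches_reach γs.2.1 (Nat.le_floor (le_of_lt γs.2.2))⟩)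
    intro x y hxy
    simpa [Subtype.ext_iff] using hxy
  have step2 := count_le M k
  -- step 3
  have hn1 : (1:ℝ) ≤ (n:ℝ) := by
    have : (1:ℕ) ≤ n := by omega
    exact_mod_cast this
  have hlog1 : (0:ℝ) ≤ Real.log ((n:ℝ)+1) := Real.log_nonneg (by linarith)
  have hlogn : (0:ℝ) ≤ Real.log (n:ℝ) := Real.log_nonneg hn1
  have h7log : 7 * Real.log ((n:ℝ)+1) ≤ 8 * Real.log (n:ℝ) := by
    have h1 : Real.log ((n:ℝ)+1) ≤ Real.log (2*(n:ℝ)) := by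
      apply Real.log_le_log (by positivity)
      have : (128:ℝ) ≤ (n:ℝ) := by exact_mod_cast hn
      linarith
    have h2 : Real.log (2*(n:ℝ)) = Real.log 2 + Real.log (n:ℝ) := by
      rw [Real.log_mul (by norm_num) (by positivity)]
    have h3 : Real.log 128 ≤ Real.log (n:ℝ) := by
      apply Real.log_le_log (by norm_num)
      exact_mod_cast hn
    have h4 : Real.log (128:ℝ) = 7 * Real.log 2 := by
      rw [show (128:ℝ) = 2^(7:ℕ) by norm_num, Real.log_pow]
      push_cast; ring
    linarith
  have hMle : (M:ℝ) ≤ 7 * (n:ℝ) ^ de := Nat.floor_le (by positivity)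
  have step3 : ((k:ℝ)+1)^M ≤ Real.exp (8 * (n:ℝ) ^ de * Real.log (n:ℝ)) := by
    have hb1 : ((k:ℝ)+1) ≤ ((n:ℝ)+1) := by
      have : (k:ℝ) ≤ (n:ℝ) := by exact_mod_cast hk
      linarith
    have h1 : ((k:ℝ)+1)^M ≤ ((n:ℝ)+1)^M := pow_le_pow_left₀ (by positivity) hb1 M
    have h2 : ((n:ℝ)+1)^M = Real.exp ((M:ℝ) * Real.log ((n:ℝ)+1)) := by
      rw [← Real.log_pow, Real.exp_log (by positivity)]
    have h3 : (M:ℝ) * Real.log ((n:ℝ)+1) ≤ 8 * (n:ℝ) ^ de * Real.log (n:ℝ) := by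
      calc (M:ℝ) * Real.log ((n:ℝ)+1) ≤ (7 * (n:ℝ) ^ de) * Real.log ((n:ℝ)+1) :=
            mul_le_mul_of_nonneg_right hMle hlog1
        _ = (n:ℝ) ^ de * (7 * Real.log ((n:ℝ)+1)) := by ring
        _ ≤ (n:ℝ) ^ de * (8 * Real.log (n:ℝ)) := mul_le_mul_of_nonneg_left h7log hden
        _ = 8 * (n:ℝ) ^ de * Real.log (n:ℝ) := by ring
    exact le_trans h1 (by rw [h2]; exact Real.exp_le_exp.mpr h3)
  calc (Nat.card {γ : ℕ → ℤ × ℤ // IsHSW k γ ∧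
          (numBranches γ k : ℝ) < 7 * (n : ℝ) ^ ((1 : ℝ) / 2 - ε)} : ℝ)
      ≤ (Nat.card {γ : ℕ → ℤ × ℤ // IsHSW k γ ∧ recordTime γ k M = k} : ℝ) := by
        exact_mod_cast step1
    _ ≤ ((k:ℝ)+1)^M * mu^k := step2
    _ ≤ Real.exp (8 * (n:ℝ) ^ de * Real.log (n:ℝ)) * mu^k :=
        mul_le_mul_of_nonneg_right step3 (pow_nonneg mu_nonneg k)
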